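/- Let R be a graded commutative 2-ring. Then the topological space Spec R (the set of prime homogeneous ideals of R with the Zariski topology) is quasi-compact. -/

import Mathlib

open CategoryTheory CategoryTheory.Limits CategoryTheory.MonoidalCategory

universe w v u v' u' v'' u''

/-- A *graded commutative 2-ring*: an essentially small preadditive symmetric monoidal
category whose tensor product is additive in each variable and in which every object
is invertible for the tensor product. -/
class GradedComm2Ring (C : Type u) [Category.{v} C] [Preadditive C] [MonoidalCategory C]
    [SymmetricCategory C] [MonoidalPreadditive C] : Prop where
  essentiallySmall : EssentiallySmall.{v} C
  invertible : ∀ g : C, ∃ g' : C, Nonempty (g ⊗ g' ≅ 𝟙_ C)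
section IdealDef

variable (C : Type u) [Category.{v} C] [Preadditive C] [MonoidalCategory C]

/-- A *homogeneous ideal* of a graded commutative 2-ring: a family of subgroups
`I(g,h) ⊆ Hom(g,h)` closed under composition with arbitrary morphisms on either side
and under tensoring with arbitrary morphisms on either side. -/
structure HomIdeal where
  carrier : ∀ g h : C, AddSubgroup (g ⟶ h)
  comp_left : ∀ {g h h' : C} (r : g ⟶ h) (s : h ⟶ h'),
      r ∈ carrier g h → r ≫ s ∈ carrier g h'
  comp_right : ∀ {g' g h : C} (t : g' ⟶ g) (r : g ⟶ h),
      r ∈ carrier g h → t ≫ r ∈ carrier g' h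
  tensor_left : ∀ {g h g' h' : C} (s : g' ⟶ h') (r : g ⟶ h),
      r ∈ carrier g h → (s ⊗ₘ r) ∈ carrier (g' ⊗ g) (h' ⊗ h)
  tensor_right : ∀ {g h g' h' : C} (r : g ⟶ h) (s : g' ⟶ h'),
      r ∈ carrier g h → (r ⊗ₘ s) ∈ carrier (g ⊗ g') (h ⊗ h')

variable {C}

namespace HomIdeal

instance : PartialOrder (HomIdeal C) where
  le I J := ∀ g h : C, I.carrier g h ≤ J.carrier g h
  le_refl I g h := le_rfl
  le_trans I J K h₁ h₂ g h := (h₁ g h).trans (h₂ g h)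
  le_antisymm I J h₁ h₂ := by
    cases I; cases J
    congr
    funext g h
    exact le_antisymm (h₁ g h) (h₂ g h)

/-- A homogeneous ideal is *proper* if it contains no identity morphism. -/
def IsProper (I : HomIdeal C) : Prop := ∀ g : C, 𝟙 g ∉ I.carrier g g

/-- A proper homogeneous ideal is *prime* if whenever a composite belongs to it, one
of the factors belongs to it. -/
structure IsPrime (I : HomIdeal C) : Prop where
  isProper : I.IsProper
  mem_or_mem : ∀ {g h l : C} (r : g ⟶ h) (s : h ⟶ l),
      r ≫ s ∈ I.carrier g l → r ∈ I.carrier g h ∨ s ∈ I.carrier h l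

end HomIdeal

end IdealDef
section SpecDef

/-- The (homogeneous) spectrum: the set of prime homogeneous ideals. -/
def Spec (C : Type u) [Category.{v} C] [Preadditive C] [MonoidalCategory C] :=
  {p : HomIdeal C // p.IsPrime}

variable {C : Type u} [Category.{v} C] [Preadditive C] [MonoidalCategory C]

/-- The closed set `V(I) = {p : I ⊆ p}`. -/
def zeroLocus (I : HomIdeal C) : Set (Spec C) := {p | I ≤ p.1}

/-- The basic open set `D_r = {p : r ∉ p}`. -/
def basicOpen {g h : C} (r : g ⟶ h) : Set (Spec C) := {p | r ∉ p.1.carrier g h}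

/-- The Zariski topology on `Spec C`, whose closed sets are the sets `V(I)` for
homogeneous ideals `I`. -/
instance : TopologicalSpace (Spec C) :=
  TopologicalSpace.generateFrom {U : Set (Spec C) | ∃ I : HomIdeal C, U = (zeroLocus I)ᶜ}

end SpecDef
section AuxProofs

open AddSubgroup

variable {C : Type u} [Category.{v} C] [Preadditive C] [MonoidalCategory C]

namespace HomIdealAux

/-! ### Additive maps given by composition and tensoring -/

private lemma comap_helper {M N : Type*} [AddCommGroup M] [AddCommGroup N] (φ : M →+ N)
    {ι : Sort*} (S : ι → AddSubgroup M) (T : ι → AddSubgroup N)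
    (h : ∀ i, ∀ x ∈ S i, φ x ∈ T i) {x : M} (hx : x ∈ ⨆ i, S i) : φ x ∈ ⨆ i, T i := by
  have h2 : (⨆ i, S i) ≤ (⨆ i, T i).comap φ :=
    iSup_le fun i x hxi => AddSubgroup.mem_comap.2 ((le_iSup T i) (h i x hxi))
  exact h2 hx

private lemma closure_helper {M N : Type*} [AddCommGroup M] [AddCommGroup N] (φ : M →+ N)
    (s : Set M) (T : AddSubgroup N) (h : ∀ x ∈ s, φ x ∈ T) {x : M}
    (hx : x ∈ AddSubgroup.closure s) : φ x ∈ T :=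
  (AddSubgroup.closure_le (T.comap φ)).2 (fun y hy => AddSubgroup.mem_comap.2 (h y hy)) hx

variable [MonoidalPreadditive C]

/-- Tensoring on the left with a fixed morphism, as an additive map. -/
def tLeft {g' h' : C} (x : g' ⟶ h') (g h : C) : (g ⟶ h) →+ (g' ⊗ g ⟶ h' ⊗ h) :=
  AddMonoidHom.mk' (fun f => x ⊗ₘ f) fun f₁ f₂ => MonoidalPreadditive.tensor_add x f₁ f₂

/-- Tensoring on the right with a fixed morphism, as an additive map. -/
def tRight {g' h' : C} (x : g' ⟶ h') (g h : C) : (g ⟶ h) →+ (g ⊗ g' ⟶ h ⊗ h') :=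
  AddMonoidHom.mk' (fun f => f ⊗ₘ x) fun f₁ f₂ => MonoidalPreadditive.add_tensor f₁ f₂ x

/-! ### Supremum of a family of homogeneous ideals -/

/-- The supremum (join) of a family of homogeneous ideals. -/
def iSupIdeal {ι : Sort w} (I : ι → HomIdeal C) : HomIdeal C where
  carrier g h := ⨆ i, (I i).carrier g h
  comp_left {g h h'} r s hr :=
    comap_helper (Preadditive.rightComp g s) _ _ (fun i x hx => (I i).comp_left x s hx) hr
  comp_right {g' g h} t r hr :=
    comap_helper (Preadditive.leftComp h t) _ _ (fun i x hx => (I i).comp_right t x hx) hr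
  tensor_left {g h g' h'} s r hr :=
    comap_helper (tLeft s g h) _ _ (fun i x hx => (I i).tensor_left s x hx) hr
  tensor_right {g h g' h'} r s hr :=
    comap_helper (tRight s g h) _ _ (fun i x hx => (I i).tensor_right x s hx) hr

lemma le_iSupIdeal {ι : Sort w} (I : ι → HomIdeal C) (i : ι) : I i ≤ iSupIdeal I :=
  fun g h => le_iSup (fun j => (I j).carrier g h) i

lemma exists_finset_of_mem_iSup {M : Type*} [AddCommGroup M] {ι : Type w}
    (S : ι → AddSubgroup M) {x : M} (hx : x ∈ ⨆ i, S i) :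
    ∃ t : Finset ι, x ∈ ⨆ i ∈ t, S i := by
  classical
  have hd : Directed (· ≤ ·) fun t : Finset ι => ⨆ i ∈ t, S i := fun t₁ t₂ =>
    ⟨t₁ ∪ t₂, biSup_mono fun i hi => Finset.mem_union_left _ hi,
      biSup_mono fun i hi => Finset.mem_union_right _ hi⟩
  have hle : (⨆ i, S i) ≤ ⨆ t : Finset ι, ⨆ i ∈ t, S i :=
    iSup_le fun i => le_iSup_of_le {i} (le_iSup₂_of_le i (Finset.mem_singleton_self i) le_rfl)
  exact (AddSubgroup.mem_iSup_of_directed hd).1 (hle hx)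

/-! ### The ideal generated by an ideal and one extra morphism -/

/-- Morphisms generated by a single morphism `r` under the ideal operations. -/
inductive Gen {g₀ h₀ : C} (r : g₀ ⟶ h₀) : ∀ g h : C, (g ⟶ h) → Prop
  | base : Gen r g₀ h₀ r
  | comp_left {g h h'} (f : g ⟶ h) (s : h ⟶ h') : Gen r g h f → Gen r g h' (f ≫ s)
  | comp_right {g' g h} (t : g' ⟶ g) (f : g ⟶ h) : Gen r g h f → Gen r g' h (t ≫ f)
  | tensor_left {g h g' h'} (s : g' ⟶ h') (f : g ⟶ h) :
      Gen r g h f → Gen r (g' ⊗ g) (h' ⊗ h) (s ⊗ₘ f)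
  | tensor_right {g h g' h'} (s : g' ⟶ h') (f : g ⟶ h) :
      Gen r g h f → Gen r (g ⊗ g') (h ⊗ h') (f ⊗ₘ s)

/-- The ideal generated by an ideal `m` together with a morphism `r`. -/
def extIdeal (m : HomIdeal C) {g₀ h₀ : C} (r : g₀ ⟶ h₀) : HomIdeal C where
  carrier g h := m.carrier g h ⊔ AddSubgroup.closure {f | Gen r g h f}
  comp_left {g h h'} f s hf := by
    obtain ⟨x, hx, y, hy, rfl⟩ := AddSubgroup.mem_sup.1 hf
    rw [Preadditive.add_comp]
    exact AddSubgroup.add_mem_sup (m.comp_left x s hx)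
      (closure_helper (Preadditive.rightComp g s) _ _
        (fun z hz => AddSubgroup.subset_closure (Gen.comp_left z s hz)) hy)
  comp_right {g' g h} t f hf := by
    obtain ⟨x, hx, y, hy, rfl⟩ := AddSubgroup.mem_sup.1 hf
    rw [Preadditive.comp_add]
    exact AddSubgroup.add_mem_sup (m.comp_right t x hx)
      (closure_helper (Preadditive.leftComp h t) _ _
        (fun z hz => AddSubgroup.subset_closure (Gen.comp_right t z hz)) hy)
  tensor_left {g h g' h'} s f hf := by
    obtain ⟨x, hx, y, hy, rfl⟩ := AddSubgroup.mem_sup.1 hf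
    rw [MonoidalPreadditive.tensor_add]
    exact AddSubgroup.add_mem_sup (m.tensor_left s x hx)
      (closure_helper (tLeft s g h) _ _
        (fun z hz => AddSubgroup.subset_closure (Gen.tensor_left s z hz)) hy)
  tensor_right {g h g' h'} f s hf := by
    obtain ⟨x, hx, y, hy, rfl⟩ := AddSubgroup.mem_sup.1 hf
    rw [MonoidalPreadditive.add_tensor]
    exact AddSubgroup.add_mem_sup (m.tensor_right x s hx)
      (closure_helper (tRight s g h) _ _
        (fun z hz => AddSubgroup.subset_closure (Gen.tensor_right s z hz)) hy)

lemma le_extIdeal (m : HomIdeal C) {g₀ h₀ : C} (r : g₀ ⟶ h₀) : m ≤ extIdeal m r :=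
  fun g h x hx => AddSubgroup.mem_sup_left hx

lemma mem_extIdeal (m : HomIdeal C) {g₀ h₀ : C} (r : g₀ ⟶ h₀) :
    r ∈ (extIdeal m r).carrier g₀ h₀ :=
  AddSubgroup.mem_sup_right (AddSubgroup.subset_closure Gen.base)

end HomIdealAux
end AuxProofs
section AuxProofs2

variable {C : Type u} [Category.{v} C] [Preadditive C] [MonoidalCategory C]

namespace HomIdealAux

variable [SymmetricCategory C]

set_option maxHeartbeats 1000000 in
/-- For an invertible object `Z`, any endomorphism of `Z` is a "scalar". -/
lemma exists_tensor_unit {Z Z' : C} (e : Z ⊗ Z' ≅ 𝟙_ C) (φ : Z ⟶ Z) :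
    ∃ u : 𝟙_ C ⟶ 𝟙_ C, φ = (λ_ Z).inv ≫ (u ⊗ₘ 𝟙 Z) ≫ (λ_ Z).hom := by
  have e' : Z' ⊗ Z ≅ 𝟙_ C := (β_ Z' Z) ≪≫ e
  let η : 𝟭 C ≅ tensorRight Z ⋙ tensorRight Z' :=
    (rightUnitorNatIso C).symm ≪≫ (curriedTensor C).flip.mapIso e.symm ≪≫
      tensorRightTensor Z Z'
  let ε : tensorRight Z' ⋙ tensorRight Z ≅ 𝟭 C :=
    (tensorRightTensor Z' Z).symm ≪≫ (curriedTensor C).flip.mapIso e' ≪≫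
      rightUnitorNatIso C
  let E : C ≌ C := CategoryTheory.Equivalence.mk (tensorRight Z) (tensorRight Z') η ε
  obtain ⟨u, hu⟩ := E.functor.map_surjective
    ((λ_ Z).hom ≫ φ ≫ (λ_ Z).inv : (tensorRight Z).obj (𝟙_ C) ⟶ (tensorRight Z).obj (𝟙_ C))
  have hu' : u ▷ Z = (λ_ Z).hom ≫ φ ≫ (λ_ Z).inv := hu
  refine ⟨u, ?_⟩
  rw [tensorHom_id, hu']
  simp

variable [MonoidalPreadditive C] [GradedComm2Ring C]

set_option maxHeartbeats 1000000 in
/-- Key lemma: if `r ≫ s` lies in a homogeneous ideal, so does `r ⊗ s`. -/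
lemma tensor_mem_of_comp_mem (m : HomIdeal C) {g h l : C} (r : g ⟶ h) (s : h ⟶ l)
    (hm : r ≫ s ∈ m.carrier g l) : (r ⊗ₘ s) ∈ m.carrier (g ⊗ h) (h ⊗ l) := by
  obtain ⟨h', ⟨e⟩⟩ := GradedComm2Ring.invertible (C := C) h
  have e₂ : (h ⊗ h) ⊗ (h' ⊗ h') ≅ 𝟙_ C :=
    α_ h h (h' ⊗ h') ≪≫ whiskerLeftIso h ((α_ h h' h').symm ≪≫
      whiskerRightIso e h' ≪≫ λ_ h') ≪≫ e
  obtain ⟨u, hu⟩ := exists_tensor_unit e₂ (β_ h h).hom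
  have h1 : r ⊗ₘ s = (r ⊗ₘ 𝟙 h) ≫ (𝟙 h ⊗ₘ s) := by
    rw [MonoidalCategory.tensorHom_comp_tensorHom, Category.comp_id, Category.id_comp]
  have h2 : r ⊗ₘ 𝟙 h = (β_ g h).hom ≫ (𝟙 h ⊗ₘ r) ≫ (β_ h h).hom := by
    have hnat := BraidedCategory.braiding_naturality r (𝟙 h)
    have : (r ⊗ₘ 𝟙 h) ≫ (β_ h h).hom ≫ (β_ h h).hom =
        (β_ g h).hom ≫ (𝟙 h ⊗ₘ r) ≫ (β_ h h).hom := by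
      rw [← Category.assoc, hnat, Category.assoc]
    simpa using this
  have slide1 : (𝟙 h ⊗ₘ r) ≫ (λ_ (h ⊗ h)).inv =
      (λ_ (h ⊗ g)).inv ≫ (𝟙 (𝟙_ C) ⊗ₘ (𝟙 h ⊗ₘ r)) := by
    simp
  have e1 : (u ⊗ₘ 𝟙 (h ⊗ h)) ≫ (𝟙 (𝟙_ C) ⊗ₘ (𝟙 h ⊗ₘ s)) = u ⊗ₘ (𝟙 h ⊗ₘ s) := by
    rw [MonoidalCategory.tensorHom_comp_tensorHom, Category.comp_id, Category.id_comp]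
  have e2 : (𝟙 (𝟙_ C) ⊗ₘ (𝟙 h ⊗ₘ s)) ≫ (u ⊗ₘ 𝟙 (h ⊗ l)) = u ⊗ₘ (𝟙 h ⊗ₘ s) := by
    rw [MonoidalCategory.tensorHom_comp_tensorHom, Category.comp_id, Category.id_comp]
  have lun : (λ_ (h ⊗ h)).hom ≫ (𝟙 h ⊗ₘ s) =
      (𝟙 (𝟙_ C) ⊗ₘ (𝟙 h ⊗ₘ s)) ≫ (λ_ (h ⊗ l)).hom := by
    simp
  have slide2 : (u ⊗ₘ 𝟙 (h ⊗ h)) ≫ (λ_ (h ⊗ h)).hom ≫ (𝟙 h ⊗ₘ s) =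
      (𝟙 (𝟙_ C) ⊗ₘ (𝟙 h ⊗ₘ s)) ≫ (u ⊗ₘ 𝟙 (h ⊗ l)) ≫ (λ_ (h ⊗ l)).hom := by
    rw [lun]
    simp only [← Category.assoc]
    rw [e1, e2]
  have slide3 : (𝟙 (𝟙_ C) ⊗ₘ (𝟙 h ⊗ₘ r)) ≫ (𝟙 (𝟙_ C) ⊗ₘ (𝟙 h ⊗ₘ s)) =
      𝟙 (𝟙_ C) ⊗ₘ (𝟙 h ⊗ₘ (r ≫ s)) := by
    rw [MonoidalCategory.tensorHom_comp_tensorHom, MonoidalCategory.tensorHom_comp_tensorHom,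
      Category.comp_id, Category.comp_id]
  have key : r ⊗ₘ s = ((β_ g h).hom ≫ (λ_ (h ⊗ g)).inv) ≫
      (𝟙 (𝟙_ C) ⊗ₘ (𝟙 h ⊗ₘ (r ≫ s))) ≫ ((u ⊗ₘ 𝟙 (h ⊗ l)) ≫ (λ_ (h ⊗ l)).hom) := by
    calc r ⊗ₘ s = (r ⊗ₘ 𝟙 h) ≫ (𝟙 h ⊗ₘ s) := h1
      _ = ((β_ g h).hom ≫ (𝟙 h ⊗ₘ r) ≫ (β_ h h).hom) ≫ (𝟙 h ⊗ₘ s) := by rw [h2]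
      _ = (β_ g h).hom ≫ (𝟙 h ⊗ₘ r) ≫ (λ_ (h ⊗ h)).inv ≫ (u ⊗ₘ 𝟙 (h ⊗ h)) ≫
            (λ_ (h ⊗ h)).hom ≫ (𝟙 h ⊗ₘ s) := by
          rw [hu]; simp only [Category.assoc]
      _ = (β_ g h).hom ≫ (λ_ (h ⊗ g)).inv ≫ (𝟙 (𝟙_ C) ⊗ₘ (𝟙 h ⊗ₘ r)) ≫
            ((u ⊗ₘ 𝟙 (h ⊗ h)) ≫ (λ_ (h ⊗ h)).hom ≫ (𝟙 h ⊗ₘ s)) := by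
          rw [← Category.assoc (𝟙 h ⊗ₘ r), slide1]; simp only [Category.assoc]
      _ = (β_ g h).hom ≫ (λ_ (h ⊗ g)).inv ≫ (𝟙 (𝟙_ C) ⊗ₘ (𝟙 h ⊗ₘ r)) ≫
            (𝟙 (𝟙_ C) ⊗ₘ (𝟙 h ⊗ₘ s)) ≫ (u ⊗ₘ 𝟙 (h ⊗ l)) ≫ (λ_ (h ⊗ l)).hom := by
          rw [slide2]
      _ = ((β_ g h).hom ≫ (λ_ (h ⊗ g)).inv) ≫ (𝟙 (𝟙_ C) ⊗ₘ (𝟙 h ⊗ₘ (r ≫ s))) ≫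
            ((u ⊗ₘ 𝟙 (h ⊗ l)) ≫ (λ_ (h ⊗ l)).hom) := by
          rw [← Category.assoc (𝟙 (𝟙_ C) ⊗ₘ (𝟙 h ⊗ₘ r)), slide3]; simp only [Category.assoc]
  rw [key]
  exact m.comp_right _ _ (m.comp_left _ _
    (m.tensor_left (𝟙 (𝟙_ C)) _ (m.tensor_left (𝟙 h) _ hm)))

end HomIdealAux
end AuxProofs2
section AuxProofs3

variable {C : Type u} [Category.{v} C] [Preadditive C] [MonoidalCategory C]
  [SymmetricCategory C] [MonoidalPreadditive C] [GradedComm2Ring C]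

namespace HomIdealAux

/-- If `r ≫ s ∈ m` then `r ⊗ₘ y' ∈ m` for every `y'` generated by `s`. -/
lemma base_gen_tensor_mem (m : HomIdeal C) {g h l : C} {r : g ⟶ h} {s : h ⟶ l}
    (hm : r ≫ s ∈ m.carrier g l) {a' b' : C} {y' : a' ⟶ b'} (hy' : Gen s a' b' y') :
    (r ⊗ₘ y') ∈ m.carrier (g ⊗ a') (h ⊗ b') := by
  induction hy' with
  | base => exact tensor_mem_of_comp_mem m r s hm
  | comp_left f d _ ih =>
    rw [show r ⊗ₘ (f ≫ d) = (r ⊗ₘ f) ≫ (𝟙 h ⊗ₘ d) by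
      rw [MonoidalCategory.tensorHom_comp_tensorHom, Category.comp_id]]
    exact m.comp_left _ _ ih
  | comp_right c f _ ih =>
    rw [show r ⊗ₘ (c ≫ f) = (𝟙 g ⊗ₘ c) ≫ (r ⊗ₘ f) by
      rw [MonoidalCategory.tensorHom_comp_tensorHom, Category.id_comp]]
    exact m.comp_right _ _ ih
  | tensor_left x f hf ih =>
    rename_i g₁ h₁ p q
    -- y' = x ⊗ₘ f with x : p ⟶ q, f : g₁ ⟶ h₁
    have E2 : r ⊗ₘ x = (β_ p g).inv ≫ (x ⊗ₘ r) ≫ (β_ q h).hom := by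
      have hnat := BraidedCategory.braiding_naturality x r
      rw [hnat, Iso.inv_hom_id_assoc]
    have E4 : (x ⊗ₘ r) ⊗ₘ f = (α_ p g g₁).hom ≫ (x ⊗ₘ (r ⊗ₘ f)) ≫ (α_ q h h₁).inv := by
      have := MonoidalCategory.associator_naturality x r f
      rw [← Category.assoc, ← this, Category.assoc, Iso.hom_inv_id, Category.comp_id]
    have E3 : (r ⊗ₘ x) ⊗ₘ f = ((β_ p g).inv ⊗ₘ 𝟙 g₁) ≫ ((x ⊗ₘ r) ⊗ₘ f) ≫
        ((β_ q h).hom ⊗ₘ 𝟙 h₁) := by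
      rw [E2, MonoidalCategory.tensorHom_comp_tensorHom, MonoidalCategory.tensorHom_comp_tensorHom,
        Category.id_comp, Category.comp_id]
    have E1 : r ⊗ₘ (x ⊗ₘ f) = (α_ g p g₁).inv ≫ ((r ⊗ₘ x) ⊗ₘ f) ≫ (α_ h q h₁).hom := by
      have := MonoidalCategory.associator_naturality r x f
      rw [this, Iso.inv_hom_id_assoc]
    have w1 : ((x ⊗ₘ r) ⊗ₘ f) ∈ m.carrier ((p ⊗ g) ⊗ g₁) ((q ⊗ h) ⊗ h₁) := by
      rw [E4]
      exact m.comp_right _ _ (m.comp_left _ _ (m.tensor_left x _ ih))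
    have w2 : ((r ⊗ₘ x) ⊗ₘ f) ∈ m.carrier ((g ⊗ p) ⊗ g₁) ((h ⊗ q) ⊗ h₁) := by
      rw [E3]
      exact m.comp_right _ _ (m.comp_left _ _ w1)
    rw [E1]
    exact m.comp_right _ _ (m.comp_left _ _ w2)
  | tensor_right x f hf ih =>
    rename_i g₁ h₁ p q
    -- y' = f ⊗ₘ x with x : p ⟶ q, f : g₁ ⟶ h₁
    have E1 : r ⊗ₘ (f ⊗ₘ x) = (α_ g g₁ p).inv ≫ ((r ⊗ₘ f) ⊗ₘ x) ≫ (α_ h h₁ q).hom := by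
      have := MonoidalCategory.associator_naturality r f x
      rw [this, Iso.inv_hom_id_assoc]
    rw [E1]
    exact m.comp_right _ _ (m.comp_left _ _ (m.tensor_right _ x ih))

/-- If `r ≫ s ∈ m` then `y ⊗ₘ y' ∈ m` for all `y` generated by `r`, `y'` generated by `s`. -/
lemma gen_gen_tensor_mem (m : HomIdeal C) {g h l : C} {r : g ⟶ h} {s : h ⟶ l}
    (hm : r ≫ s ∈ m.carrier g l) {a b : C} {y : a ⟶ b} (hy : Gen r a b y)
    {a' b' : C} {y' : a' ⟶ b'} (hy' : Gen s a' b' y') :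
    (y ⊗ₘ y') ∈ m.carrier (a ⊗ a') (b ⊗ b') := by
  induction hy generalizing a' b' y' with
  | base => exact base_gen_tensor_mem m hm hy'
  | comp_left f d _ ih =>
    rename_i a₁ b₁ b₂
    rw [show (f ≫ d) ⊗ₘ y' = (f ⊗ₘ y') ≫ (d ⊗ₘ 𝟙 b') by
      rw [MonoidalCategory.tensorHom_comp_tensorHom, Category.comp_id]]
    exact m.comp_left _ _ (ih hy')
  | comp_right c f _ ih =>
    rw [show (c ≫ f) ⊗ₘ y' = (c ⊗ₘ 𝟙 a') ≫ (f ⊗ₘ y') by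
      rw [MonoidalCategory.tensorHom_comp_tensorHom, Category.id_comp]]
    exact m.comp_right _ _ (ih hy')
  | tensor_left x f hf ih =>
    rename_i g₁ h₁ p q
    have E : (x ⊗ₘ f) ⊗ₘ y' = (α_ p g₁ a').hom ≫ (x ⊗ₘ (f ⊗ₘ y')) ≫ (α_ q h₁ b').inv := by
      have := MonoidalCategory.associator_naturality x f y'
      rw [← Category.assoc, ← this, Category.assoc, Iso.hom_inv_id, Category.comp_id]
    rw [E]
    exact m.comp_right _ _ (m.comp_left _ _ (m.tensor_left x _ (ih hy')))
  | tensor_right x f hf ih =>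
    rename_i g₁ h₁ p q
    have E : (f ⊗ₘ x) ⊗ₘ y' = (α_ g₁ p a').hom ≫ (f ⊗ₘ (x ⊗ₘ y')) ≫ (α_ h₁ q b').inv := by
      have := MonoidalCategory.associator_naturality f x y'
      rw [← Category.assoc, ← this, Category.assoc, Iso.hom_inv_id, Category.comp_id]
    rw [E]
    exact m.comp_right _ _ (m.comp_left _ _ (ih (Gen.tensor_left x y' hy')))

/-- Every proper homogeneous ideal is contained in a prime homogeneous ideal. -/
lemma exists_le_prime (I : HomIdeal C) (hI : I.IsProper) :
    ∃ p : HomIdeal C, I ≤ p ∧ p.IsPrime := by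
  obtain ⟨m, hIm, hmax⟩ := zorn_le_nonempty₀ {J : HomIdeal C | J.IsProper}
    (fun c hcs hchain y hy => by
      haveI : Nonempty c := ⟨⟨y, hy⟩⟩
      refine ⟨iSupIdeal (fun J : c => (J : HomIdeal C)), ?_, fun J hJ g h =>
        le_iSup (fun J : c => (J : HomIdeal C).carrier g h) ⟨J, hJ⟩⟩
      intro a ha
      have hd : Directed (· ≤ ·) fun J : c => (J : HomIdeal C).carrier a a := by
        intro J K
        rcases hchain.total J.2 K.2 with hh | hh
        · exact ⟨K, hh a a, le_rfl⟩
        · exact ⟨J, le_rfl, hh a a⟩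
      obtain ⟨J, hJ⟩ := (AddSubgroup.mem_iSup_of_directed hd).1 ha
      exact hcs J.2 a hJ) I hI
  refine ⟨m, hIm, ⟨hmax.1, ?_⟩⟩
  intro g h l r s hrs
  by_contra hc
  push_neg at hc
  obtain ⟨hr, hs⟩ := hc
  have himp : ∀ {g₀ h₀ : C} (t : g₀ ⟶ h₀), t ∉ m.carrier g₀ h₀ →
      ∃ a : C, 𝟙 a ∈ (extIdeal m t).carrier a a := by
    intro g₀ h₀ t ht
    by_contra hno
    push_neg at hno
    exact ht ((hmax.2 (fun a => hno a) (le_extIdeal m t)) g₀ h₀ (mem_extIdeal m t))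
  obtain ⟨a, ha⟩ := himp r hr
  obtain ⟨b, hb⟩ := himp s hs
  obtain ⟨x, hx, y, hy, hxy⟩ := AddSubgroup.mem_sup.1 ha
  obtain ⟨x', hx', y', hy', hxy'⟩ := AddSubgroup.mem_sup.1 hb
  have hyy : (y ⊗ₘ y') ∈ m.carrier (a ⊗ b) (a ⊗ b) :=
    closure_helper (tRight y' a a) _ _
      (fun z hz => closure_helper (tLeft z b b) _ _
        (fun w hw => gen_gen_tensor_mem m hrs hz hw) hy') hy
  have hmem : (𝟙 a ⊗ₘ 𝟙 b) ∈ m.carrier (a ⊗ b) (a ⊗ b) := by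
    rw [← hxy, ← hxy', MonoidalPreadditive.add_tensor, MonoidalPreadditive.tensor_add,
      MonoidalPreadditive.tensor_add]
    exact AddSubgroup.add_mem _
      (AddSubgroup.add_mem _ (m.tensor_right x x' hx) (m.tensor_right x y' hx))
      (AddSubgroup.add_mem _ (m.tensor_left y x' hx') hyy)
  rw [MonoidalCategory.id_tensorHom_id] at hmem
  exact hmax.1 (a ⊗ b) hmem

end HomIdealAux
end AuxProofs3
section AuxProofs4

/-- Alexander subbase lemma: compactness can be checked on a subbasis. -/
theorem HomIdealAux.alexander_compactSpace {X : Type w} [t : TopologicalSpace X]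
    (S : Set (Set X)) (hgen : t = TopologicalSpace.generateFrom S)
    (hsub : ∀ 𝒞 ⊆ S, ⋃₀ 𝒞 = Set.univ → ∃ F ⊆ 𝒞, F.Finite ∧ ⋃₀ F = Set.univ) :
    CompactSpace X := by
  rw [← isCompact_univ_iff, isCompact_iff_ultrafilter_le_nhds]
  intro f _
  by_cases hx : ∃ x, ∀ U ∈ S, x ∈ U → U ∈ f
  · obtain ⟨x, hx⟩ := hx
    refine ⟨x, Set.mem_univ x, ?_⟩
    rw [hgen, TopologicalSpace.nhds_generateFrom]
    exact le_iInf₂ fun s hs => Filter.le_principal_iff.2 (hx s hs.2 hs.1)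
  · push_neg at hx
    choose U hUS hxU hUf using hx
    obtain ⟨F, hFsub, hFfin, hFuniv⟩ := hsub (Set.range U) (Set.range_subset_iff.2 hUS)
      (Set.eq_univ_of_forall fun x => Set.mem_sUnion.2 ⟨U x, Set.mem_range_self x, hxU x⟩)
    have hmem : ⋃₀ F ∈ f := by rw [hFuniv]; exact Filter.univ_mem
    obtain ⟨s, hsF, hsf⟩ := (Ultrafilter.finite_sUnion_mem_iff hFfin).1 hmem
    obtain ⟨x, rfl⟩ := hFsub hsF
    exact absurd hsf (hUf x)

end AuxProofs4

/-- **Statement 10.** The spectrum of a graded commutative 2-ring, endowed with the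
Zariski topology, is quasi-compact. -/
theorem spec_compactSpace
    {C : Type u} [Category.{v} C] [Preadditive C] [MonoidalCategory C]
    [SymmetricCategory C] [MonoidalPreadditive C] [GradedComm2Ring C] :
    CompactSpace (Spec C) := by
  classical
  refine HomIdealAux.alexander_compactSpace
    {U : Set (Spec C) | ∃ I : HomIdeal C, U = (zeroLocus I)ᶜ} rfl ?_
  intro 𝒞 h𝒞 hcov
  have hch : ∀ U : {U // U ∈ 𝒞}, ∃ I : HomIdeal C, (U : Set (Spec C)) = (zeroLocus I)ᶜ :=
    fun U => h𝒞 U.2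
  choose I hI using hch
  have himp : ∃ a : C, 𝟙 a ∈ (HomIdealAux.iSupIdeal I).carrier a a := by
    by_contra hno
    push_neg at hno
    obtain ⟨p, hp, hprime⟩ := HomIdealAux.exists_le_prime (HomIdealAux.iSupIdeal I) hno
    have hq : (⟨p, hprime⟩ : Spec C) ∈ ⋃₀ 𝒞 := by
      rw [hcov]; exact Set.mem_univ _
    obtain ⟨U, hU𝒞, hqU⟩ := hq
    have hUz : U = (zeroLocus (I ⟨U, hU𝒞⟩))ᶜ := hI ⟨U, hU𝒞⟩
    rw [hUz] at hqU
    exact hqU (le_trans (HomIdealAux.le_iSupIdeal I ⟨U, hU𝒞⟩) hp)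
  obtain ⟨a, ha⟩ := himp
  obtain ⟨t, ht⟩ := HomIdealAux.exists_finset_of_mem_iSup
    (fun U : {U // U ∈ 𝒞} => (I U).carrier a a) ha
  refine ⟨Subtype.val '' (t : Set {U // U ∈ 𝒞}), ?_, ?_, ?_⟩
  · rintro _ ⟨U, _, rfl⟩; exact U.2
  · exact (t.finite_toSet.image _)
  · apply Set.eq_univ_of_forall
    intro p
    by_contra hp
    have hle : ∀ U ∈ t, (I U).carrier a a ≤ p.1.carrier a a := by
      intro U hU
      have hpU : p ∉ (U : Set (Spec C)) := fun hpu =>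
        hp (Set.mem_sUnion.2 ⟨U, ⟨U, Finset.mem_coe.2 hU, rfl⟩, hpu⟩)
      rw [hI U] at hpU
      have hz : p ∈ zeroLocus (I U) := Set.not_notMem.1 (fun hnz => hpU hnz)
      exact hz a a
    have hfin : (⨆ U ∈ t, (I U).carrier a a) ≤ p.1.carrier a a := iSup₂_le hle
    exact p.2.isProper a (hfin ht)
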